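/- Every periodic solution of system (S1) lies on a circle centered at the origin of radius 0 or 1: if x, y : ℝ → ℝ is a solution of (S1) and there exists T > 0 with x(t+T) = x(t) and y(t+T) = y(t) for all t, then the function x(t)² + y(t)² is constant, and its constant value is either 0 or 1. -/

import Mathlib

/-- Every periodic solution of system (S1) lies on a circle centered at the
origin of radius `0` or `1`. -/
theorem periodic_solutions_S1 (x y : ℝ → ℝ)
    (hx : ∀ t : ℝ, HasDerivAt x (-y t + x t * ((x t) ^ 2 + (y t) ^ 2 - 1)) t)
    (hy : ∀ t : ℝ, HasDerivAt y (x t + y t * ((x t) ^ 2 + (y t) ^ 2 - 1)) t)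
    (T : ℝ) (hT : 0 < T)
    (hper : ∀ t : ℝ, x (t + T) = x t ∧ y (t + T) = y t) :
    ∃ c : ℝ, (∀ t : ℝ, (x t) ^ 2 + (y t) ^ 2 = c) ∧ (c = 0 ∨ c = 1) := by
  set r : ℝ → ℝ := fun t => (x t) ^ 2 + (y t) ^ 2 with hr_def
  have hr : ∀ t, HasDerivAt r (2 * r t * (r t - 1)) t := by
    intro t
    have h : HasDerivAt r _ t := ((hx t).pow 2).add ((hy t).pow 2)
    convert h using 1
    simp only [hr_def]
    ring
  have hrd : Differentiable ℝ r := fun t => (hr t).differentiableAt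
  have hrper : Function.Periodic r T := by
    intro t
    simp only [hr_def, (hper t).1, (hper t).2]
  -- max and min on [0, T]
  obtain ⟨tM, htM, hM⟩ := isCompact_Icc.exists_isMaxOn (Set.nonempty_Icc.mpr hT.le)
    (hrd.continuous.continuousOn (s := Set.Icc 0 T))
  obtain ⟨tm, htm, hm⟩ := isCompact_Icc.exists_isMinOn (Set.nonempty_Icc.mpr hT.le)
    (hrd.continuous.continuousOn (s := Set.Icc 0 T))
  have hMax : ∀ t, r t ≤ r tM := by
    intro t
    obtain ⟨s, hs, heq⟩ := hrper.exists_mem_Ico₀ hT t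
    rw [heq]
    exact hM (Set.mem_Icc.mpr ⟨hs.1, hs.2.le⟩)
  have hMin : ∀ t, r tm ≤ r t := by
    intro t
    obtain ⟨s, hs, heq⟩ := hrper.exists_mem_Ico₀ hT t
    rw [heq]
    exact hm (Set.mem_Icc.mpr ⟨hs.1, hs.2.le⟩)
  have hM0 : 2 * r tM * (r tM - 1) = 0 := by
    have : IsLocalMax r tM := Filter.Eventually.of_forall hMax
    exact this.hasDerivAt_eq_zero (hr tM)
  have hm0 : 2 * r tm * (r tm - 1) = 0 := by
    have : IsLocalMin r tm := Filter.Eventually.of_forall hMin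
    exact this.hasDerivAt_eq_zero (hr tm)
  have hMcases : r tM = 0 ∨ r tM = 1 := by
    rcases mul_eq_zero.mp hM0 with h | h
    · left; rcases mul_eq_zero.mp h with h | h
      · norm_num at h
      · exact h
    · right; linarith
  have hmcases : r tm = 0 ∨ r tm = 1 := by
    rcases mul_eq_zero.mp hm0 with h | h
    · left; rcases mul_eq_zero.mp h with h | h
      · norm_num at h
      · exact h
    · right; linarith
  by_cases heqmM : r tm = r tM
  · exact ⟨r tM, fun t => le_antisymm (hMax t) (heqmM ▸ hMin t), hMcases⟩
  · -- then r tm = 0 and r tM = 1, so 0 ≤ r ≤ 1, deriv ≤ 0, antitone, periodic ⇒ constant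
    exfalso
    have hmtM : r tm ≤ r tM := hMin tM
    have hm0' : r tm = 0 := by
      rcases hmcases with h | h
      · exact h
      · rcases hMcases with h' | h' <;> [linarith; exact absurd (h.trans h'.symm) heqmM]
    have hM1 : r tM = 1 := by
      rcases hMcases with h | h
      · exact absurd (hm0'.trans h.symm) heqmM
      · exact h
    have hbound : ∀ t, 0 ≤ r t ∧ r t ≤ 1 := fun t =>
      ⟨hm0' ▸ hMin t, hM1 ▸ hMax t⟩
    have hanti : Antitone r := by
      apply antitone_of_deriv_nonpos hrd
      intro t
      rw [(hr t).deriv]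
      have h1 := (hbound t).1
      have h2 := (hbound t).2
      nlinarith
    -- r is antitone and periodic, hence constant on [0, T]
    have hconst : ∀ t ∈ Set.Icc (0:ℝ) T, r t = r 0 := by
      intro t ht
      have h1 : r t ≤ r 0 := hanti ht.1
      have h2 : r T ≤ r t := hanti ht.2
      have h3 : r T = r 0 := by
        have := hrper 0
        simpa using this
      linarith
    have e1 := hconst tM htM
    have e2 := hconst tm htm
    rw [hM1] at e1
    rw [hm0'] at e2
    linarith
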